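/- With the notation C_{p,q} := ∑_{a,b=1}^N x_a^p y_b^q · Y(x_a)X(y_b) / ((x_a−y_b) X'(x_a) Y'(y_b)), one has C_{-1,1} − C_{0,0} = (1 − ∏_i y_i/x_i) · ∑_i (x_i − y_i). -/

import Mathlib

open Finset

/-- `C_{p,q} = ∑_{a,b} x_a^p y_b^q · Y(x_a) X(y_b) / ((x_a−y_b) X'(x_a) Y'(y_b))`. -/
noncomputable def Cpq {N : ℕ} (x y : Fin N → ℂ) (p q : ℤ) : ℂ :=
  ∑ a, ∑ b, x a ^ p * y b ^ q *
    (∏ i, (x a - y i)) * (∏ i, (y b - x i)) /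
    ((x a - y b) * (∏ i ∈ Finset.univ.erase a, (x a - x i)) *
      (∏ i ∈ Finset.univ.erase b, (y b - y i)))

open Polynomial in
lemma interp_eval {N : ℕ} {y : Fin N → ℂ} (hyinj : Function.Injective y)
    (f : ℂ[X]) (hf : f.degree < (N : ℕ)) (w : ℂ) :
    f.eval w = ∑ b, f.eval (y b) *
      (∏ i ∈ Finset.univ.erase b, (w - y i)) / (∏ i ∈ Finset.univ.erase b, (y b - y i)) := by
  have hinj : Set.InjOn y (Finset.univ : Finset (Fin N)) := hyinj.injOn
  have h := Lagrange.eq_interpolate (s := Finset.univ) hinj (by simpa using hf)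
  conv_lhs => rw [h]
  rw [Lagrange.interpolate_apply, eval_finset_sum]
  refine Finset.sum_congr rfl fun b _ => ?_
  rw [eval_mul, eval_C, Lagrange.basis, eval_prod]
  rw [Finset.prod_congr rfl (fun i _ => by
    rw [Lagrange.basisDivisor]; simp : ∀ i ∈ univ.erase b,
      eval w (Lagrange.basisDivisor (y b) (y i)) = (y b - y i)⁻¹ * (w - y i))]
  rw [Finset.prod_mul_distrib, Finset.prod_inv_distrib]
  ring

theorem stmt4 (N : ℕ) (x y : Fin N → ℂ)
    (hxinj : Function.Injective x) (hyinj : Function.Injective y)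
    (hx : ∀ i, x i ≠ 0) (hy : ∀ j, y j ≠ 0)
    (hxy : ∀ i j, x i ≠ y j) :
    Cpq x y (-1) 1 - Cpq x y 0 0 = (1 - ∏ i, y i / x i) * ∑ i, (x i - y i) := by
  classical
  rcases Nat.eq_zero_or_pos N with hN0 | hN
  · subst hN0
    simp [Cpq]
  -- polynomials
  set pX : Polynomial ℂ := ∏ i, (Polynomial.X - Polynomial.C (x i)) with hpXdef
  set pY : Polynomial ℂ := ∏ i, (Polynomial.X - Polynomial.C (y i)) with hpYdef
  have hevX : ∀ w : ℂ, pX.eval w = ∏ i, (w - x i) := by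
    intro w; simp [hpXdef, Polynomial.eval_prod]
  have hevY : ∀ w : ℂ, pY.eval w = ∏ i, (w - y i) := by
    intro w; simp [hpYdef, Polynomial.eval_prod]
  have hmX : pX.Monic := Polynomial.monic_prod_of_monic _ _ fun i _ => Polynomial.monic_X_sub_C _
  have hmY : pY.Monic := Polynomial.monic_prod_of_monic _ _ fun i _ => Polynomial.monic_X_sub_C _
  have hdX : pX.degree = (N : ℕ) := by
    rw [hpXdef, Polynomial.degree_prod]
    simp
  have hdY : pY.degree = (N : ℕ) := by
    rw [hpYdef, Polynomial.degree_prod]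
    simp
  have hnatX : pX.natDegree = N := Polynomial.natDegree_eq_of_degree_eq_some hdX
  have hnatY : pY.natDegree = N := Polynomial.natDegree_eq_of_degree_eq_some hdY
  have hsub_lt : (pX - pY).degree < (N : ℕ) := by
    rcases eq_or_ne pX pY with h | h
    · rw [h, sub_self, Polynomial.degree_zero]
      exact_mod_cast WithBot.bot_lt_coe N
    · have := Polynomial.degree_sub_lt (hdX.trans hdY.symm) hmX.ne_zero
        (by rw [hmX.leadingCoeff, hmY.leadingCoeff])
      rwa [hdX] at this
  set sX : ℂ := ∑ i, x i with hsXdef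
  set sY : ℂ := ∑ i, y i with hsYdef
  have hcoeffX : pX.coeff (N - 1) = -sX := by
    have h1 := Polynomial.prod_X_sub_C_nextCoeff (s := (univ : Finset (Fin N))) x
    rw [Polynomial.nextCoeff_of_natDegree_pos (by rw [hnatX]; exact hN), hnatX] at h1
    exact h1
  have hcoeffY : pY.coeff (N - 1) = -sY := by
    have h1 := Polynomial.prod_X_sub_C_nextCoeff (s := (univ : Finset (Fin N))) y
    rw [Polynomial.nextCoeff_of_natDegree_pos (by rw [hnatY]; exact hN), hnatY] at h1
    exact h1
  set f2 : Polynomial ℂ := Polynomial.X * (pX - pY) + Polynomial.C (sX - sY) * pY with hf2def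
  have hf2deg : f2.degree < (N : ℕ) := by
    rw [Polynomial.degree_lt_iff_coeff_zero]
    intro m hm
    have hm' : N ≤ m := by exact_mod_cast hm
    have hXmul : ∀ k : ℕ, 0 < k → (Polynomial.X * (pX - pY)).coeff k = (pX - pY).coeff (k - 1) := by
      intro k hk
      obtain ⟨j, rfl⟩ : ∃ j, k = j + 1 := ⟨k - 1, (Nat.succ_pred_eq_of_pos hk).symm⟩
      rw [Polynomial.coeff_X_mul]
      simp
    rcases eq_or_lt_of_le hm' with he | hl
    · rw [← he, hf2def, Polynomial.coeff_add, Polynomial.coeff_C_mul,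
        hXmul N hN, Polynomial.coeff_sub, hcoeffX, hcoeffY]
      have h2 : pY.coeff N = 1 := by rw [← hnatY]; exact hmY.coeff_natDegree
      rw [h2]; ring
    · rw [hf2def, Polynomial.coeff_add, Polynomial.coeff_C_mul,
        hXmul m (lt_of_le_of_lt (Nat.zero_le _) hl)]
      have h2 : (pX - pY).coeff (m - 1) = 0 := Polynomial.coeff_eq_zero_of_degree_lt
        (lt_of_lt_of_le hsub_lt (by exact_mod_cast Nat.le_pred_of_lt hl))
      have h3 : pY.coeff m = 0 := Polynomial.coeff_eq_zero_of_degree_lt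
        (by rw [hdY]; exact_mod_cast hl)
      rw [h2, h3]; ring
  -- nonvanishing
  have hA : ∀ a, (∏ i, (x a - y i)) ≠ 0 := fun a =>
    prod_ne_zero_iff.mpr fun i _ => sub_ne_zero.mpr (hxy a i)
  have hdXne : ∀ a, (∏ i ∈ univ.erase a, (x a - x i)) ≠ 0 := fun a =>
    prod_ne_zero_iff.mpr fun i hi =>
      sub_ne_zero.mpr fun h => (mem_erase.mp hi).1 (hxinj h).symm
  have hdYne : ∀ b, (∏ i ∈ univ.erase b, (y b - y i)) ≠ 0 := fun b =>
    prod_ne_zero_iff.mpr fun i hi =>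
      sub_ne_zero.mpr fun h => (mem_erase.mp hi).1 (hyinj h).symm
  have hxyne : ∀ a b, x a - y b ≠ 0 := fun a b => sub_ne_zero.mpr (hxy a b)
  have halg1 : ∀ c E B d : ℂ, c ≠ 0 → d ≠ 0 → B * E / d = c * E * (B / (c * d)) := by
    intro c E B d hc hd; field_simp
  have halg3 : ∀ A B c dX dY : ℂ, c ≠ 0 → dX ≠ 0 → dY ≠ 0 →
      1 * 1 * A * B / (c * dX * dY) = A / dX * (B / (c * dY)) := by
    intro A B c dX dY hc h1 h2; field_simp
  have halg4 : ∀ A B c dX dY xa yb : ℂ, c ≠ 0 → dX ≠ 0 → dY ≠ 0 → xa ≠ 0 →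
      xa⁻¹ * yb * A * B / (c * dX * dY) = A / (xa * dX) * (yb * B / (c * dY)) := by
    intro A B c dX dY xa yb hc h1 h2 h3; field_simp
  have halg5 : ∀ A xa dX s : ℂ, xa ≠ 0 → dX ≠ 0 →
      A / (xa * dX) * (s - xa) = s * (A / (xa * dX)) - A / dX := by
    intro A xa dX s h1 h2; field_simp
  have halg2 : ∀ c E A d : ℂ, c ≠ 0 → d ≠ 0 →
      A * E / d = -((0 - c) * E) * (A / (c * d)) := by
    intro c E A d hc hd; field_simp; ring
  -- identity 1
  have hevXa : ∀ a, pX.eval (x a) = 0 := fun a => by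
    rw [hevX]; exact Finset.prod_eq_zero (mem_univ a) (sub_self _)
  have hevYb : ∀ b, pY.eval (y b) = 0 := fun b => by
    rw [hevY]; exact Finset.prod_eq_zero (mem_univ b) (sub_self _)
  have key1 : ∀ a, ∑ b, (∏ i, (y b - x i)) /
      ((x a - y b) * ∏ i ∈ univ.erase b, (y b - y i)) = -1 := by
    intro a
    have h := interp_eval hyinj (pX - pY) hsub_lt (x a)
    rw [Polynomial.eval_sub, hevXa a, zero_sub, hevY] at h
    have hterm : ∀ b ∈ (univ : Finset (Fin N)),
        (pX - pY).eval (y b) * (∏ i ∈ univ.erase b, (x a - y i)) /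
          (∏ i ∈ univ.erase b, (y b - y i))
        = (∏ i, (x a - y i)) *
          ((∏ i, (y b - x i)) / ((x a - y b) * ∏ i ∈ univ.erase b, (y b - y i))) := by
      intro b _
      rw [Polynomial.eval_sub, hevYb b, sub_zero, hevX]
      have hfac : (x a - y b) * ∏ i ∈ univ.erase b, (x a - y i) = ∏ i, (x a - y i) :=
        Finset.mul_prod_erase univ (fun i => x a - y i) (mem_univ b)
      rw [← hfac]
      exact halg1 _ _ _ _ (hxyne a b) (hdYne b)
    rw [Finset.sum_congr rfl hterm, ← Finset.mul_sum] at h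
    exact mul_left_cancel₀ (hA a) (h.symm.trans (by ring))
  -- identity 2
  have key2 : ∀ a, ∑ b, y b * (∏ i, (y b - x i)) /
      ((x a - y b) * ∏ i ∈ univ.erase b, (y b - y i)) = sX - sY - x a := by
    intro a
    have h := interp_eval hyinj f2 hf2deg (x a)
    have hfa : f2.eval (x a) = (∏ i, (x a - y i)) * (sX - sY - x a) := by
      rw [hf2def]
      simp only [Polynomial.eval_add, Polynomial.eval_mul, Polynomial.eval_X,
        Polynomial.eval_C, Polynomial.eval_sub, hevXa a, hevY]
      ring
    rw [hfa] at h
    have hterm : ∀ b ∈ (univ : Finset (Fin N)),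
        f2.eval (y b) * (∏ i ∈ univ.erase b, (x a - y i)) /
          (∏ i ∈ univ.erase b, (y b - y i))
        = (∏ i, (x a - y i)) *
          (y b * (∏ i, (y b - x i)) / ((x a - y b) * ∏ i ∈ univ.erase b, (y b - y i))) := by
      intro b _
      have hfb : f2.eval (y b) = y b * ∏ i, (y b - x i) := by
        rw [hf2def]
        simp only [Polynomial.eval_add, Polynomial.eval_mul, Polynomial.eval_X,
          Polynomial.eval_C, Polynomial.eval_sub, hevYb b, hevX]
        ring
      rw [hfb]
      have hfac : (x a - y b) * ∏ i ∈ univ.erase b, (x a - y i) = ∏ i, (x a - y i) :=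
        Finset.mul_prod_erase univ (fun i => x a - y i) (mem_univ b)
      rw [← hfac]
      exact halg1 _ _ _ _ (hxyne a b) (hdYne b)
    rw [Finset.sum_congr rfl hterm, ← Finset.mul_sum] at h
    exact mul_left_cancel₀ (hA a) h.symm
  -- identity 3
  have key3 : ∑ a, (∏ i, (x a - y i)) / (x a * ∏ i ∈ univ.erase a, (x a - x i))
      = 1 - ∏ i, y i / x i := by
    have hsub_lt' : (pY - pX).degree < (N : ℕ) := by
      have : pY - pX = -(pX - pY) := by ring
      rwa [this, Polynomial.degree_neg]
    have h := interp_eval hxinj (pY - pX) hsub_lt' 0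
    rw [Polynomial.eval_sub, hevY, hevX] at h
    have hP0x : (∏ i, ((0:ℂ) - x i)) ≠ 0 :=
      prod_ne_zero_iff.mpr fun i _ => sub_ne_zero.mpr (Ne.symm (hx i))
    have hterm : ∀ a ∈ (univ : Finset (Fin N)),
        (pY - pX).eval (x a) * (∏ i ∈ univ.erase a, ((0:ℂ) - x i)) /
          (∏ i ∈ univ.erase a, (x a - x i))
        = -(∏ i, ((0:ℂ) - x i)) *
          ((∏ i, (x a - y i)) / (x a * ∏ i ∈ univ.erase a, (x a - x i))) := by
      intro a _
      rw [Polynomial.eval_sub, hevXa a, sub_zero, hevY]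
      have hfac : ((0:ℂ) - x a) * ∏ i ∈ univ.erase a, ((0:ℂ) - x i) = ∏ i, ((0:ℂ) - x i) :=
        Finset.mul_prod_erase univ (fun i => (0:ℂ) - x i) (mem_univ a)
      rw [← hfac]
      exact halg2 _ _ _ _ (hx a) (hdXne a)
    rw [Finset.sum_congr rfl hterm, ← Finset.mul_sum] at h
    have halg : ∀ Px Py T : ℂ, Px ≠ 0 → Py - Px = -Px * T → T = 1 - Py / Px := by
      intro Px Py T h0 hEq
      have h1 : T = (Px - Py) / Px := by
        rw [eq_div_iff h0]; linear_combination hEq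
      rw [h1, sub_div, div_self h0]
    have hT := halg _ _ _ hP0x h
    rw [hT]
    have hny : ∏ i, ((0:ℂ) - y i) = (-1)^N * ∏ i, y i := by
      calc ∏ i, ((0:ℂ) - y i) = ∏ i : Fin N, (-1 * y i) :=
            Finset.prod_congr rfl fun i _ => by ring
        _ = (∏ _i : Fin N, (-1:ℂ)) * ∏ i, y i := Finset.prod_mul_distrib
        _ = (-1)^N * ∏ i, y i := by rw [Finset.prod_const]; simp
    have hnx : ∏ i, ((0:ℂ) - x i) = (-1)^N * ∏ i, x i := by
      calc ∏ i, ((0:ℂ) - x i) = ∏ i : Fin N, (-1 * x i) :=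
            Finset.prod_congr rfl fun i _ => by ring
        _ = (∏ _i : Fin N, (-1:ℂ)) * ∏ i, x i := Finset.prod_mul_distrib
        _ = (-1)^N * ∏ i, x i := by rw [Finset.prod_const]; simp
    rw [hny, hnx, Finset.prod_div_distrib,
      mul_div_mul_left _ _ (pow_ne_zero N (neg_ne_zero.mpr (one_ne_zero)))]
  -- assemble
  have hC00 : Cpq x y 0 0
      = -∑ a, (∏ i, (x a - y i)) / (∏ i ∈ univ.erase a, (x a - x i)) := by
    rw [Cpq, ← Finset.sum_neg_distrib]
    refine Finset.sum_congr rfl fun a _ => ?_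
    have hterm : ∀ b ∈ (univ : Finset (Fin N)),
        x a ^ (0:ℤ) * y b ^ (0:ℤ) * (∏ i, (x a - y i)) * (∏ i, (y b - x i)) /
          ((x a - y b) * (∏ i ∈ univ.erase a, (x a - x i)) *
            (∏ i ∈ univ.erase b, (y b - y i)))
        = ((∏ i, (x a - y i)) / (∏ i ∈ univ.erase a, (x a - x i))) *
          ((∏ i, (y b - x i)) / ((x a - y b) * ∏ i ∈ univ.erase b, (y b - y i))) := by
      intro b _
      rw [zpow_zero, zpow_zero]
      exact halg3 _ _ _ _ _ (hxyne a b) (hdXne a) (hdYne b)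
    rw [Finset.sum_congr rfl hterm, ← Finset.mul_sum, key1 a]
    ring
  have hCm11 : Cpq x y (-1) 1
      = (sX - sY) * (1 - ∏ i, y i / x i)
        - ∑ a, (∏ i, (x a - y i)) / (∏ i ∈ univ.erase a, (x a - x i)) := by
    rw [Cpq]
    have hout : ∀ a ∈ (univ : Finset (Fin N)),
        (∑ b, x a ^ (-1:ℤ) * y b ^ (1:ℤ) * (∏ i, (x a - y i)) * (∏ i, (y b - x i)) /
          ((x a - y b) * (∏ i ∈ univ.erase a, (x a - x i)) *
            (∏ i ∈ univ.erase b, (y b - y i))))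
        = (sX - sY) * ((∏ i, (x a - y i)) / (x a * ∏ i ∈ univ.erase a, (x a - x i)))
          - (∏ i, (x a - y i)) / (∏ i ∈ univ.erase a, (x a - x i)) := by
      intro a _
      have hterm : ∀ b ∈ (univ : Finset (Fin N)),
          x a ^ (-1:ℤ) * y b ^ (1:ℤ) * (∏ i, (x a - y i)) * (∏ i, (y b - x i)) /
            ((x a - y b) * (∏ i ∈ univ.erase a, (x a - x i)) *
              (∏ i ∈ univ.erase b, (y b - y i)))
          = ((∏ i, (x a - y i)) / (x a * ∏ i ∈ univ.erase a, (x a - x i))) *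
            (y b * (∏ i, (y b - x i)) /
              ((x a - y b) * ∏ i ∈ univ.erase b, (y b - y i))) := by
        intro b _
        rw [zpow_neg_one, zpow_one]
        exact halg4 _ _ _ _ _ _ _ (hxyne a b) (hdXne a) (hdYne b) (hx a)
      rw [Finset.sum_congr rfl hterm, ← Finset.mul_sum, key2 a]
      exact halg5 _ _ _ _ (hx a) (hdXne a)
    rw [Finset.sum_congr rfl hout, Finset.sum_sub_distrib, ← Finset.mul_sum, key3]
  rw [hCm11, hC00]
  have hs : ∑ i, (x i - y i) = sX - sY := Finset.sum_sub_distrib _ _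
  rw [hs]
  ring
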